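/- arXiv:1906.06365 — 3 statements merged into one kernel-verified Lean document; each statement's English description precedes it below -/
import Mathlib

section
/- Let S and Y be measurable spaces (with the diagonal of Y × Y measurable), μ a probability measure on S × Y, and let Λ₁, …, Λ_k ⊆ S be pairwise disjoint measurable sets with Λ₀ = S \ (Λ₁ ∪ ⋯ ∪ Λ_k). Let H₀, H₁, …, H_k be nonempty classes of measurable predictors h : S → Y, and let H be a class of measurable predictors closed under gluing along this partition, i.e. for every choice h_i ∈ H_i (i = 0, …, k) the predictor defined by h(s) = h_i(s) for s ∈ Λ_i belongs to H. Then L*(H) ≤ ∑_{i=0}^{k} μ(Λ_i × Y) · L*_{Λ_i}(H_i), with terms of measure-zero regions taken to be zero. In particular, bounding the conditional risk on any region by 1 yields the region-wise upper bound on the approximation error used in the error-decomposition theorem. -/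
open MeasureTheory

/-- The 0/1 risk of a predictor `h : S → Y` under a measure `μ` on `S × Y`. -/
noncomputable def risk {S Y : Type*} [MeasurableSpace S] [MeasurableSpace Y]
    (μ : Measure (S × Y)) (h : S → Y) : ENNReal :=
  μ {p : S × Y | h p.1 ≠ p.2}

/-- The conditional 0/1 risk of `h` on the region `A ⊆ S`. -/
noncomputable def condRisk {S Y : Type*} [MeasurableSpace S] [MeasurableSpace Y]
    (μ : Measure (S × Y)) (A : Set S) (h : S → Y) : ENNReal :=
  μ ({p : S × Y | h p.1 ≠ p.2} ∩ (A ×ˢ (Set.univ : Set Y))) /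
    μ (A ×ˢ (Set.univ : Set Y))

lemma inter_le_mul_condRisk {S Y : Type*} [MeasurableSpace S] [MeasurableSpace Y]
    (μ : Measure (S × Y)) [IsFiniteMeasure μ] (A : Set S) (h : S → Y) :
    μ ({p : S × Y | h p.1 ≠ p.2} ∩ (A ×ˢ (Set.univ : Set Y))) ≤
      μ (A ×ˢ (Set.univ : Set Y)) * condRisk μ A h := by
  rcases eq_or_ne (μ (A ×ˢ (Set.univ : Set Y))) 0 with hc | hc
  · calc μ ({p : S × Y | h p.1 ≠ p.2} ∩ (A ×ˢ (Set.univ : Set Y)))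
        ≤ μ (A ×ˢ (Set.univ : Set Y)) := measure_mono Set.inter_subset_right
      _ = 0 := hc
      _ ≤ _ := zero_le
  · rw [condRisk, ENNReal.mul_div_cancel hc (measure_ne_top μ _)]

lemma condRisk_le_one {S Y : Type*} [MeasurableSpace S] [MeasurableSpace Y]
    (μ : Measure (S × Y)) (A : Set S) (h : S → Y) :
    condRisk μ A h ≤ 1 := by
  rw [condRisk]
  exact ENNReal.div_le_of_le_mul (by rw [one_mul]; exact measure_mono Set.inter_subset_right)

/-- decomposition of the minimal risk over a finite measurable partition
`Λ₀, Λ₁, …, Λ_k` of `S`, for a class `H` closed under gluing along the partition.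
(In `ℝ≥0∞`, a term with measure-zero region vanishes since `0 * x = 0`.) -/
theorem stmt3 {S Y : Type*} [MeasurableSpace S] [MeasurableSpace Y]
    (hdiag : MeasurableSet {p : Y × Y | p.1 = p.2})
    (μ : Measure (S × Y)) [IsProbabilityMeasure μ]
    (k : ℕ) (Λ : Fin k → Set S) (hΛm : ∀ i, MeasurableSet (Λ i))
    (hdisj : Pairwise (Function.onFun Disjoint Λ))
    (Λ₀ : Set S) (hΛ₀ : Λ₀ = (⋃ i, Λ i)ᶜ)
    (H₀ : Set (S → Y)) (Hs : Fin k → Set (S → Y)) (H : Set (S → Y))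
    (hH₀ne : H₀.Nonempty) (hHsne : ∀ i, (Hs i).Nonempty)
    (hH₀m : ∀ h ∈ H₀, Measurable h) (hHsm : ∀ i, ∀ h ∈ Hs i, Measurable h)
    (hHm : ∀ h ∈ H, Measurable h)
    (hglue : ∀ (h₀ : S → Y) (hh : Fin k → S → Y),
      h₀ ∈ H₀ → (∀ i, hh i ∈ Hs i) →
      ∀ g : S → Y, (∀ i, ∀ s ∈ Λ i, g s = hh i s) → (∀ s ∈ Λ₀, g s = h₀ s) → g ∈ H) :
    (⨅ h ∈ H, risk μ h) ≤
      μ (Λ₀ ×ˢ (Set.univ : Set Y)) * (⨅ h ∈ H₀, condRisk μ Λ₀ h) +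
      ∑ i : Fin k, μ (Λ i ×ˢ (Set.univ : Set Y)) * (⨅ h ∈ Hs i, condRisk μ (Λ i) h) := by
  classical
  set B₀ : Set (S × Y) := Λ₀ ×ˢ (Set.univ : Set Y) with hB₀def
  set B : Fin k → Set (S × Y) := fun i => Λ i ×ˢ (Set.univ : Set Y) with hBdef
  set I₀ : ENNReal := ⨅ h ∈ H₀, condRisk μ Λ₀ h with hI₀def
  set Is : Fin k → ENNReal := fun i => ⨅ h ∈ Hs i, condRisk μ (Λ i) h with hIsdef
  -- infima are ≤ 1, hence finite
  have hI₀le : I₀ ≤ 1 := by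
    obtain ⟨h, hh⟩ := hH₀ne
    exact le_trans (biInf_le _ hh) (condRisk_le_one μ Λ₀ h)
  have hIsle : ∀ i, Is i ≤ 1 := fun i => by
    obtain ⟨h, hh⟩ := hHsne i
    exact le_trans (biInf_le _ hh) (condRisk_le_one μ (Λ i) h)
  -- disjointness and measurability of the B's, and their total measure
  have hBm : ∀ i, MeasurableSet (B i) := fun i => (hΛm i).prod MeasurableSet.univ
  have hB₀m : MeasurableSet B₀ := by
    have : MeasurableSet Λ₀ := by rw [hΛ₀]; exact (MeasurableSet.iUnion hΛm).compl
    exact this.prod MeasurableSet.univ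
  have hBdisj : Pairwise (Function.onFun Disjoint B) := by
    intro i j hij
    refine Set.disjoint_left.mpr fun p hp hp' => ?_
    exact Set.disjoint_left.mp (hdisj hij) hp.1 hp'.1
  have hB₀disj : Disjoint B₀ (⋃ i, B i) := by
    refine Set.disjoint_left.mpr fun p hp hp' => ?_
    obtain ⟨_, ⟨i, rfl⟩, hpi⟩ := hp'
    have : p.1 ∈ (⋃ i, Λ i)ᶜ := hΛ₀ ▸ hp.1
    exact this (Set.mem_iUnion.mpr ⟨i, hpi.1⟩)
  have hcoverU : B₀ ∪ ⋃ i, B i = Set.univ := by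
    ext p
    simp only [Set.mem_union, Set.mem_iUnion, Set.mem_univ, iff_true, hB₀def, hBdef,
      Set.mem_prod, Set.mem_univ, and_true, hΛ₀, Set.mem_compl_iff, Set.mem_iUnion]
    tauto
  have hsum1 : μ B₀ + ∑ i, μ (B i) = 1 := by
    rw [← tsum_fintype (L := .unconditional _), ← measure_iUnion hBdisj hBm,
      ← measure_union hB₀disj (MeasurableSet.iUnion hBm), hcoverU, measure_univ]
  -- main ε-argument
  refine ENNReal.le_of_forall_pos_le_add fun ε hε _ => ?_
  have hεne : (ε : ENNReal) ≠ 0 := by exact_mod_cast hε.ne'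
  -- choose near-optimal predictors
  obtain ⟨h₀, hm₀, hlt₀⟩ : ∃ h ∈ H₀, condRisk μ Λ₀ h < I₀ + ε := by
    have : I₀ < I₀ + ε := ENNReal.lt_add_right (hI₀le.trans_lt (by norm_num)).ne hεne
    rw [hI₀def, iInf_lt_iff] at this
    obtain ⟨h, hh⟩ := this
    rw [iInf_lt_iff] at hh
    obtain ⟨hm, hlt⟩ := hh
    exact ⟨h, hm, hlt⟩
  have hex : ∀ i, ∃ h ∈ Hs i, condRisk μ (Λ i) h < Is i + ε := by
    intro i
    have : Is i < Is i + ε := ENNReal.lt_add_right ((hIsle i).trans_lt (by norm_num)).ne hεne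
    rw [hIsdef, iInf_lt_iff] at this
    obtain ⟨h, hh⟩ := this
    rw [iInf_lt_iff] at hh
    obtain ⟨hm, hlt⟩ := hh
    exact ⟨h, hm, hlt⟩
  choose hh hhm hhlt using hex
  -- glue
  set g : S → Y := fun s => if hx : ∃ i, s ∈ Λ i then hh hx.choose s else h₀ s with hgdef
  have hgΛ : ∀ i, ∀ s ∈ Λ i, g s = hh i s := by
    intro i s hs
    have hx : ∃ j, s ∈ Λ j := ⟨i, hs⟩
    have hchoose : hx.choose = i := by
      by_contra hne
      exact Set.disjoint_left.mp (hdisj hne) hx.choose_spec hs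
    simp only [hgdef, dif_pos hx, hchoose]
  have hgΛ₀ : ∀ s ∈ Λ₀, g s = h₀ s := by
    intro s hs
    have hx : ¬∃ i, s ∈ Λ i := by
      rw [hΛ₀] at hs
      exact fun ⟨i, hi⟩ => hs (Set.mem_iUnion.mpr ⟨i, hi⟩)
    simp only [hgdef, dif_neg hx]
  have hgH : g ∈ H := hglue h₀ hh hm₀ hhm g hgΛ hgΛ₀
  -- now the chain of inequalities
  calc (⨅ h ∈ H, risk μ h) ≤ risk μ g := biInf_le _ hgH
    _ = μ {p : S × Y | g p.1 ≠ p.2} := rfl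
    _ ≤ μ ({p : S × Y | g p.1 ≠ p.2} ∩ B₀) + ∑ i, μ ({p : S × Y | g p.1 ≠ p.2} ∩ B i) := by
        have : {p : S × Y | g p.1 ≠ p.2}
            = ({p : S × Y | g p.1 ≠ p.2} ∩ B₀) ∪ ⋃ i, ({p : S × Y | g p.1 ≠ p.2} ∩ B i) := by
          rw [← Set.inter_iUnion, ← Set.inter_union_distrib_left, hcoverU, Set.inter_univ]
        refine le_trans (le_of_eq (congrArg μ this)) ?_
        refine (measure_union_le _ _).trans (add_le_add_right ?_ _)
        exact (measure_iUnion_le _).trans_eq (tsum_fintype _)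
    _ = μ ({p : S × Y | h₀ p.1 ≠ p.2} ∩ B₀)
        + ∑ i, μ ({p : S × Y | hh i p.1 ≠ p.2} ∩ B i) := by
        congr 1
        · congr 1
          ext p
          exact and_congr_left fun hp => by rw [Set.mem_setOf_eq, Set.mem_setOf_eq,
            hgΛ₀ p.1 hp.1]
        · refine Finset.sum_congr rfl fun i _ => ?_
          congr 1
          ext p
          exact and_congr_left fun hp => by rw [Set.mem_setOf_eq, Set.mem_setOf_eq,
            hgΛ i p.1 hp.1]
    _ ≤ μ B₀ * condRisk μ Λ₀ h₀ + ∑ i, μ (B i) * condRisk μ (Λ i) (hh i) :=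
        add_le_add (inter_le_mul_condRisk μ Λ₀ h₀)
          (Finset.sum_le_sum fun i _ => inter_le_mul_condRisk μ (Λ i) (hh i))
    _ ≤ μ B₀ * (I₀ + ε) + ∑ i, μ (B i) * (Is i + ε) :=
        add_le_add (mul_le_mul_right hlt₀.le _)
          (Finset.sum_le_sum fun i _ => mul_le_mul_right (hhlt i).le _)
    _ = (μ B₀ * I₀ + ∑ i, μ (B i) * Is i) + (μ B₀ + ∑ i, μ (B i)) * ε := by
        simp only [mul_add, Finset.sum_add_distrib, add_mul, Finset.sum_mul]
        ring
    _ = (μ B₀ * I₀ + ∑ i, μ (B i) * Is i) + ε := by rw [hsum1, one_mul]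
end

section
/- Let p, q, r ∈ ℝ² satisfy min(p₁, q₁) > r₁ and p₂ > q₂ (the first coordinate separates {p, q} from r, and the second coordinate separates p from q). Then for every target vector (t₁, t₂, t₃) ∈ ℝ³ and every ε > 0 there exists a two-hidden-layer logistic network N : ℝ² → ℝ such that |N(p) − t₁| < ε, |N(q) − t₂| < ε, and |N(r) − t₃| < ε. (Given two score values that separate a triple of items appropriately, a small logistic network can implement any triple basis to arbitrary precision.) -/
/-- The logistic sigmoid `σ(t) = 1 / (1 + exp (−t))`. -/
noncomputable def sigmoid (t : ℝ) : ℝ := 1 / (1 + Real.exp (-t))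

/-- A fully connected network `ℝ² → ℝ` with two hidden layers of two logistic units each
and a linear output unit. -/
noncomputable def twoLayerNet (a₁ a₂ a₃ a₄ : ℝ × ℝ) (β₁ β₂ β₃ β₄ c₀ c₁ c₂ : ℝ)
    (z : ℝ × ℝ) : ℝ :=
  let h₁ := sigmoid (a₁.1 * z.1 + a₁.2 * z.2 + β₁)
  let h₂ := sigmoid (a₂.1 * z.1 + a₂.2 * z.2 + β₂)
  c₁ * sigmoid (a₃.1 * h₁ + a₃.2 * h₂ + β₃) +
    c₂ * sigmoid (a₄.1 * h₁ + a₄.2 * h₂ + β₄) + c₀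

open Filter Topology


lemma sigmoid_pos (t : ℝ) : 0 < sigmoid t := by unfold sigmoid; positivity

lemma sigmoid_lt_one (t : ℝ) : sigmoid t < 1 := by
  unfold sigmoid
  rw [div_lt_one (by positivity)]
  linarith [Real.exp_pos (-t)]

lemma tendsto_sigmoid_atTop : Tendsto sigmoid atTop (𝓝 1) := by
  have h : Tendsto (fun t : ℝ => Real.exp (-t)) atTop (𝓝 0) :=
    Real.tendsto_exp_atBot.comp tendsto_neg_atTop_atBot
  have h2 := (tendsto_const_nhds (x := (1:ℝ)) (f := atTop)).div
    ((tendsto_const_nhds (x := (1:ℝ))).add h) (by norm_num)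
  have h3 : sigmoid = fun i => (1 + Real.exp (-i))⁻¹ := by funext t; simp [sigmoid]
  simpa [Pi.div_def, h3] using h2

lemma tendsto_sigmoid_atBot : Tendsto sigmoid atBot (𝓝 0) := by
  have h : Tendsto (fun t : ℝ => 1 + Real.exp (-t)) atBot atTop := by
    apply tendsto_atTop_add_const_left
    exact Real.tendsto_exp_atTop.comp tendsto_neg_atBot_atTop
  have h2 := tendsto_inv_atTop_zero.comp h
  have he : sigmoid = (fun r : ℝ => r⁻¹) ∘ (fun t : ℝ => 1 + Real.exp (-t)) := by
    funext t; simp [sigmoid, one_div, Function.comp]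
  rw [he]; exact h2

lemma tendsto_one_of_ev {f : ℝ → ℝ} (h : ∀ᶠ s in atTop, s/4 ≤ f s) :
    Tendsto (fun s => sigmoid (f s)) atTop (𝓝 1) :=
  tendsto_sigmoid_atTop.comp (tendsto_atTop_mono' atTop h
    (tendsto_id.atTop_div_const (by norm_num)))

lemma tendsto_zero_of_ev {f : ℝ → ℝ} (h : ∀ᶠ s in atTop, f s ≤ -(s/4)) :
    Tendsto (fun s => sigmoid (f s)) atTop (𝓝 0) :=
  tendsto_sigmoid_atBot.comp (tendsto_atBot_mono' atTop h
    (tendsto_neg_atBot_iff.mpr (tendsto_id.atTop_div_const (by norm_num))))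

lemma ev_hi {d : ℝ} (hd : 0 < d) : ∀ᶠ s in atTop, (7:ℝ)/8 ≤ sigmoid (s*d) := by
  have h : Tendsto (fun s : ℝ => sigmoid (s*d)) atTop (𝓝 1) :=
    tendsto_sigmoid_atTop.comp (tendsto_id.atTop_mul_const hd)
  exact h.eventually (eventually_ge_nhds (by norm_num))

lemma ev_lo {d : ℝ} (hd : d < 0) : ∀ᶠ s in atTop, sigmoid (s*d) ≤ (1:ℝ)/8 := by
  have h : Tendsto (fun s : ℝ => sigmoid (s*d)) atTop (𝓝 0) :=
    tendsto_sigmoid_atBot.comp (tendsto_id.atTop_mul_const_of_neg hd)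
  exact h.eventually (eventually_le_nhds (by norm_num))

set_option maxHeartbeats 1000000 in
/-- given two score coordinates separating the triple `(p, q, r)`
appropriately, a two-hidden-layer logistic network can hit any target values on the three
points to arbitrary precision (neural implementation of a triple basis). -/
theorem stmt9 (p q r : ℝ × ℝ) (h1 : r.1 < min p.1 q.1) (h2 : q.2 < p.2) :
    ∀ t₁ t₂ t₃ : ℝ, ∀ ε > (0 : ℝ),
      ∃ a₁ a₂ a₃ a₄ : ℝ × ℝ, ∃ β₁ β₂ β₃ β₄ c₀ c₁ c₂ : ℝ,
        |twoLayerNet a₁ a₂ a₃ a₄ β₁ β₂ β₃ β₄ c₀ c₁ c₂ p - t₁| < ε ∧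
        |twoLayerNet a₁ a₂ a₃ a₄ β₁ β₂ β₃ β₄ c₀ c₁ c₂ q - t₂| < ε ∧
        |twoLayerNet a₁ a₂ a₃ a₄ β₁ β₂ β₃ β₄ c₀ c₁ c₂ r - t₃| < ε := by
  intro t₁ t₂ t₃ ε hε
  set θ₁ : ℝ := (r.1 + min p.1 q.1) / 2 with hθ₁
  set θ₂ : ℝ := (q.2 + p.2) / 2 with hθ₂
  have hmp := min_le_left p.1 q.1
  have hmq := min_le_right p.1 q.1
  have hp1 : 0 < p.1 - θ₁ := by simp only [hθ₁]; linarith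
  have hq1 : 0 < q.1 - θ₁ := by simp only [hθ₁]; linarith
  have hr1 : r.1 - θ₁ < 0 := by simp only [hθ₁]; linarith [lt_of_lt_of_le h1 hmp]
  have hp2 : 0 < p.2 - θ₂ := by simp only [hθ₂]; linarith
  have hq2 : q.2 - θ₂ < 0 := by simp only [hθ₂]; linarith
  set c₀ : ℝ := t₃
  set c₁ : ℝ := t₁ - t₂
  set c₂ : ℝ := t₂ - t₃
  -- per-point first-layer values
  have key : ∀ z : ℝ × ℝ, ∀ s : ℝ,
      twoLayerNet (s,0) (0,s) (s,s) (s,0) (-(s*θ₁)) (-(s*θ₂)) (-(3*s/2)) (-(s/2)) c₀ c₁ c₂ z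
      = c₁ * sigmoid (s * sigmoid (s*(z.1-θ₁)) + s * sigmoid (s*(z.2-θ₂)) + -(3*s/2))
        + c₂ * sigmoid (s * sigmoid (s*(z.1-θ₁)) + 0 * sigmoid (s*(z.2-θ₂)) + -(s/2)) + c₀ := by
    intro z s
    simp only [twoLayerNet]
    have e1 : s * z.1 + 0 * z.2 + -(s*θ₁) = s*(z.1-θ₁) := by ring
    have e2 : 0 * z.1 + s * z.2 + -(s*θ₂) = s*(z.2-θ₂) := by ring
    rw [e1, e2]
  have hσ1 : ∀ (z : ℝ × ℝ), 0 < z.1 - θ₁ → 0 < z.2 - θ₂ →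
      Tendsto (fun s : ℝ =>
        twoLayerNet (s,0) (0,s) (s,s) (s,0) (-(s*θ₁)) (-(s*θ₂)) (-(3*s/2)) (-(s/2)) c₀ c₁ c₂ z)
        atTop (𝓝 (c₁ + c₂ + c₀)) := by
    intro z hz1 hz2
    have A : Tendsto (fun s : ℝ =>
        sigmoid (s * sigmoid (s*(z.1-θ₁)) + s * sigmoid (s*(z.2-θ₂)) + -(3*s/2))) atTop (𝓝 1) := by
      apply tendsto_one_of_ev
      filter_upwards [ev_hi hz1, ev_hi hz2, eventually_ge_atTop (0:ℝ)] with s a b c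
      linarith [mul_le_mul_of_nonneg_left a c, mul_le_mul_of_nonneg_left b c]
    have B : Tendsto (fun s : ℝ =>
        sigmoid (s * sigmoid (s*(z.1-θ₁)) + 0 * sigmoid (s*(z.2-θ₂)) + -(s/2))) atTop (𝓝 1) := by
      apply tendsto_one_of_ev
      filter_upwards [ev_hi hz1, eventually_ge_atTop (0:ℝ)] with s a c
      linarith [mul_le_mul_of_nonneg_left a c]
    have := ((A.const_mul c₁).add (B.const_mul c₂)).add_const c₀
    simp only [mul_one] at this
    simpa only [key z] using this
  -- q : first hi, second lo
  have hσ2 : Tendsto (fun s : ℝ =>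
        twoLayerNet (s,0) (0,s) (s,s) (s,0) (-(s*θ₁)) (-(s*θ₂)) (-(3*s/2)) (-(s/2)) c₀ c₁ c₂ q)
        atTop (𝓝 (c₂ + c₀)) := by
    have A : Tendsto (fun s : ℝ =>
        sigmoid (s * sigmoid (s*(q.1-θ₁)) + s * sigmoid (s*(q.2-θ₂)) + -(3*s/2))) atTop (𝓝 0) := by
      apply tendsto_zero_of_ev
      filter_upwards [ev_lo hq2, eventually_ge_atTop (0:ℝ)] with s b c
      linarith [mul_le_mul_of_nonneg_left b c,
        mul_le_mul_of_nonneg_left (sigmoid_lt_one (s*(q.1-θ₁))).le c]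
    have B : Tendsto (fun s : ℝ =>
        sigmoid (s * sigmoid (s*(q.1-θ₁)) + 0 * sigmoid (s*(q.2-θ₂)) + -(s/2))) atTop (𝓝 1) := by
      apply tendsto_one_of_ev
      filter_upwards [ev_hi hq1, eventually_ge_atTop (0:ℝ)] with s a c
      linarith [mul_le_mul_of_nonneg_left a c]
    have := ((A.const_mul c₁).add (B.const_mul c₂)).add_const c₀
    simp only [mul_one, mul_zero, zero_add] at this
    simpa only [key q] using this
  -- r : first lo
  have hσ3 : Tendsto (fun s : ℝ =>
        twoLayerNet (s,0) (0,s) (s,s) (s,0) (-(s*θ₁)) (-(s*θ₂)) (-(3*s/2)) (-(s/2)) c₀ c₁ c₂ r)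
        atTop (𝓝 c₀) := by
    have A : Tendsto (fun s : ℝ =>
        sigmoid (s * sigmoid (s*(r.1-θ₁)) + s * sigmoid (s*(r.2-θ₂)) + -(3*s/2))) atTop (𝓝 0) := by
      apply tendsto_zero_of_ev
      filter_upwards [ev_lo hr1, eventually_ge_atTop (0:ℝ)] with s a c
      linarith [mul_le_mul_of_nonneg_left a c,
        mul_le_mul_of_nonneg_left (sigmoid_lt_one (s*(r.2-θ₂))).le c]
    have B : Tendsto (fun s : ℝ =>
        sigmoid (s * sigmoid (s*(r.1-θ₁)) + 0 * sigmoid (s*(r.2-θ₂)) + -(s/2))) atTop (𝓝 0) := by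
      apply tendsto_zero_of_ev
      filter_upwards [ev_lo hr1, eventually_ge_atTop (0:ℝ)] with s a c
      linarith [mul_le_mul_of_nonneg_left a c]
    have := ((A.const_mul c₁).add (B.const_mul c₂)).add_const c₀
    simp only [mul_zero, zero_add] at this
    simpa only [key r] using this
  have Hp := hσ1 p hp1 hp2
  have e1 : c₁ + c₂ + c₀ = t₁ := by simp only [c₀, c₁, c₂]; ring
  have e2 : c₂ + c₀ = t₂ := by simp only [c₀, c₂]; ring
  rw [e1] at Hp
  rw [e2] at hσ2
  have Ep := Metric.tendsto_nhds.mp Hp ε hε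
  have Eq' := Metric.tendsto_nhds.mp hσ2 ε hε
  have Er := Metric.tendsto_nhds.mp hσ3 ε hε
  obtain ⟨s, hs1, hs2, hs3⟩ := (Ep.and (Eq'.and Er)).exists
  exact ⟨(s,0), (0,s), (s,s), (s,0), -(s*θ₁), -(s*θ₂), -(3*s/2), -(s/2), c₀, c₁, c₂,
    by rwa [Real.dist_eq] at hs1, by rwa [Real.dist_eq] at hs2, by rwa [Real.dist_eq] at hs3⟩
end

section
/- The set-dependent-embeddings aggregation model with a reference point can violate IIA: there exist d, ℓ ∈ ℕ, a linear map f : ℝ^d → ℝ^ℓ, a Lipschitz, strictly increasing, piecewise-linear nonlinearity μ : ℝ → ℝ, and finite sets s' ⊂ s ⊂ ℝ^d such that, taking the reference point r(t) ∈ ℝ^ℓ to be the coordinatewise mean of f over t and writing g(x, t) = ∑_{i=1}^{ℓ} μ( f_i(x) − r_i(t) ), the function g(·, s) has a unique maximizer y over s, the function g(·, s') has a unique maximizer y' over s', y ∈ s', and y' ≠ y. Hence passing item scores through an asymmetric nonlinearity relative to a set-dependent reference point allows the induced choice function to violate IIA (Definition 2). -/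
/-- A function `ℝ → ℝ` is piecewise linear if, outside a finite set of breakpoints,
it is locally affine. -/
def IsPiecewiseLinear (mu : ℝ → ℝ) : Prop :=
  ∃ B : Finset ℝ, ∀ x : ℝ, x ∉ B → ∃ a b ε : ℝ, 0 < ε ∧
    ∀ y ∈ Set.Ioo (x - ε) (x + ε), mu y = a * y + b

noncomputable def myMu : ℝ → ℝ := fun t => if t ≤ 0 then t else t / 2

lemma myMu_strictMono : StrictMono myMu := by
  intro x y h
  unfold myMu
  split_ifs with h1 h2 h2 <;> (try push_neg at *) <;> nlinarith

lemma myMu_lipschitz : LipschitzWith 1 myMu := by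
  rw [lipschitzWith_iff_dist_le_mul]
  intro x y
  simp only [Real.dist_eq, NNReal.coe_one, one_mul, myMu]
  split_ifs with h1 h2 h2 <;> (try push_neg at *) <;> rw [abs_le] <;>
    constructor <;> cases abs_cases (x - y) <;> nlinarith

lemma myMu_pwl : IsPiecewiseLinear myMu := by
  refine ⟨{0}, fun x hx => ?_⟩
  simp only [Finset.mem_singleton] at hx
  rcases lt_or_gt_of_ne hx with h | h
  · exact ⟨1, 0, -x, by linarith, fun y hy => by
      simp only [Set.mem_Ioo] at hy
      simp [myMu, if_pos (by linarith : y ≤ 0)]⟩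
  · exact ⟨1/2, 0, x, by linarith, fun y hy => by
      simp only [Set.mem_Ioo] at hy
      have : ¬ (y ≤ 0) := by linarith [hy.1]
      simp [myMu, if_neg this]; ring⟩

/-- the set-dependent-embeddings aggregation model with inductive bias,
`g(x, t) = ∑ i, μ(f_i(x) − r_i(t))` where `r(t)` is the coordinatewise mean of `f` over `t`
and `μ` is a Lipschitz, strictly increasing, piecewise-linear nonlinearity, can violate IIA:
there are finite sets `s' ⊂ s` whose unique `g`-maximizers `y` and `y'` differ even though
`y ∈ s'`. -/
theorem stmt14 : ∃ (d l : ℕ) (f : (Fin d → ℝ) →ₗ[ℝ] (Fin l → ℝ)) (mu : ℝ → ℝ)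
    (s s' : Finset (Fin d → ℝ)) (y y' : Fin d → ℝ),
    (∃ K : NNReal, LipschitzWith K mu) ∧ StrictMono mu ∧ IsPiecewiseLinear mu ∧
    s' ⊂ s ∧
    y ∈ s ∧
    (∀ x ∈ s, x ≠ y →
      ∑ i, mu (f x i - (∑ z ∈ s, f z i) / s.card) <
        ∑ i, mu (f y i - (∑ z ∈ s, f z i) / s.card)) ∧
    y' ∈ s' ∧
    (∀ x ∈ s', x ≠ y' →
      ∑ i, mu (f x i - (∑ z ∈ s', f z i) / s'.card) <
        ∑ i, mu (f y' i - (∑ z ∈ s', f z i) / s'.card)) ∧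
    y ∈ s' ∧ y' ≠ y := by
  set a : Fin 2 → ℝ := ![4, 0] with ha
  set b : Fin 2 → ℝ := ![0, 5] with hb
  set c : Fin 2 → ℝ := ![0, -10] with hc
  have hab : a ≠ b := by
    intro h; have := congrFun h 0; simp [ha, hb] at this
  have hac : a ≠ c := by
    intro h; have := congrFun h 0; simp [ha, hc] at this
  have hbc : b ≠ c := by
    intro h; have := congrFun h 1; simp only [hb, hc, Matrix.cons_val_one,
      Matrix.head_cons] at this; norm_num at this
  refine ⟨2, 2, LinearMap.id, myMu, {a, b, c}, {a, b}, a, b,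
    ⟨1, myMu_lipschitz⟩, myMu_strictMono, myMu_pwl, ?_, ?_, ?_, ?_, ?_, ?_, ?_⟩
  · constructor
    · intro x hx
      simp only [Finset.mem_insert, Finset.mem_singleton] at hx ⊢
      tauto
    · intro h
      have := h (Finset.mem_insert_of_mem (Finset.mem_insert_of_mem
        (Finset.mem_singleton_self c)))
      simp only [Finset.mem_insert, Finset.mem_singleton] at this
      tauto
  · simp
  · intro x hx hxa
    have hcard : ({a, b, c} : Finset (Fin 2 → ℝ)).card = 3 := by
      rw [Finset.card_insert_of_notMem (by simp [hab, hac]),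
        Finset.card_insert_of_notMem (by simp [hbc]), Finset.card_singleton]
    have hsum : ∀ i, (∑ z ∈ ({a, b, c} : Finset (Fin 2 → ℝ)), (LinearMap.id (R := ℝ)) z i)
        = a i + b i + c i := by
      intro i
      rw [Finset.sum_insert (by simp [hab, hac]),
        Finset.sum_insert (by simp [hbc]), Finset.sum_singleton]
      simp [add_assoc]
    simp only [Finset.mem_insert, Finset.mem_singleton] at hx
    rcases hx with rfl | rfl | rfl
    · exact absurd rfl hxa
    all_goals
      rw [Fin.sum_univ_two, Fin.sum_univ_two, hsum 0, hsum 1, hcard]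
      simp only [LinearMap.id_coe, id_eq, ha, hb, hc, Matrix.cons_val_zero,
        Matrix.cons_val_one, Matrix.head_cons, myMu]
      norm_num
  · simp
  · intro x hx hxb
    have hcard : ({a, b} : Finset (Fin 2 → ℝ)).card = 2 := by
      rw [Finset.card_insert_of_notMem (by simp [hab]), Finset.card_singleton]
    have hsum : ∀ i, (∑ z ∈ ({a, b} : Finset (Fin 2 → ℝ)), (LinearMap.id (R := ℝ)) z i)
        = a i + b i := by
      intro i
      rw [Finset.sum_insert (by simp [hab]), Finset.sum_singleton]
      simp
    simp only [Finset.mem_insert, Finset.mem_singleton] at hx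
    rcases hx with rfl | rfl
    · rw [Fin.sum_univ_two, Fin.sum_univ_two, hsum 0, hsum 1, hcard]
      simp only [LinearMap.id_coe, id_eq, ha, hb, Matrix.cons_val_zero,
        Matrix.cons_val_one, Matrix.head_cons, myMu]
      norm_num
    · exact absurd rfl hxb
  · simp
  · exact hab.symm
end
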